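/- Let λ < 0, c > 0 and a > 0, and let r, θ : [0,1] → ℝ be continuously differentiable functions with r(α) > 0, r'(α) = √c · cos θ(α), and sin θ(α) = λ (r(α) − a²/r(α)) for all α ∈ [0,1]. Assume that the set {α ∈ [0,1] : cos θ(α) = 0} has empty interior. Then θ'(α) = λ √c (1 + a²/r(α)²) < λ√c < 0 for every α ∈ [0,1]; in particular θ is strictly decreasing on [0,1]. -/

import Mathlib

/-- Monotonicity of the tangent angle along a steady-state exterior curve with
constant negative mean curvature `lam`. -/
theorem theta_strict_anti (lam c a : ℝ) (hlam : lam < 0) (hc : 0 < c) (ha : 0 < a)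
    (r θ : ℝ → ℝ) (hrC1 : ContDiff ℝ 1 r) (hθC1 : ContDiff ℝ 1 θ)
    (hrpos : ∀ α ∈ Set.Icc (0:ℝ) 1, 0 < r α)
    (hr' : ∀ α ∈ Set.Icc (0:ℝ) 1, deriv r α = Real.sqrt c * Real.cos (θ α))
    (hsin : ∀ α ∈ Set.Icc (0:ℝ) 1, Real.sin (θ α) = lam * (r α - a ^ 2 / r α))
    (hcos : interior {α : ℝ | α ∈ Set.Icc (0:ℝ) 1 ∧ Real.cos (θ α) = 0} = ∅) :
    (∀ α ∈ Set.Icc (0:ℝ) 1,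
      deriv θ α = lam * Real.sqrt c * (1 + a ^ 2 / (r α) ^ 2) ∧
      deriv θ α < lam * Real.sqrt c ∧ lam * Real.sqrt c < 0) ∧
    StrictAntiOn θ (Set.Icc 0 1) := by
  have hrc : Continuous r := hrC1.continuous
  have hθd : Differentiable ℝ θ := hθC1.differentiable one_ne_zero
  have hrd : Differentiable ℝ r := hrC1.differentiable one_ne_zero
  have hθ' : Continuous (deriv θ) := hθC1.continuous_deriv le_rfl
  have hsqrt : 0 < Real.sqrt c := Real.sqrt_pos.mpr hc
  -- positive lower bound for r on [0,1]
  obtain ⟨β, hβmem, hβmin⟩ :=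
    isCompact_Icc.exists_isMinOn (Set.nonempty_Icc.mpr zero_le_one) hrc.continuousOn
  set m : ℝ := r β with hm
  have hmpos : 0 < m := hrpos β hβmem
  have hmle : ∀ α ∈ Set.Icc (0:ℝ) 1, m ≤ r α := fun α hα => hβmin hα
  -- globally continuous version of the target derivative
  set G : ℝ → ℝ := fun x => lam * Real.sqrt c * (1 + a ^ 2 / (max (r x) m) ^ 2) with hG
  have hmaxpos : ∀ x : ℝ, 0 < max (r x) m := fun x => lt_max_of_lt_right hmpos
  have hGc : Continuous G := by
    apply (continuous_const).mul
    apply continuous_const.add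
    apply Continuous.div continuous_const ((hrc.max continuous_const).pow 2)
    intro x
    exact pow_ne_zero 2 (hmaxpos x).ne'
  have hGeq : ∀ α ∈ Set.Icc (0:ℝ) 1,
      G α = lam * Real.sqrt c * (1 + a ^ 2 / (r α) ^ 2) := by
    intro α hα
    simp only [hG, max_eq_left (hmle α hα)]
  -- the dense set where we can compute the derivative
  set S : Set ℝ := {α : ℝ | α ∈ Set.Icc (0:ℝ) 1 ∧ Real.cos (θ α) = 0} with hS
  set D : Set ℝ := Set.Ioo (0:ℝ) 1 ∩ Sᶜ with hD
  have hScomp : Dense Sᶜ := by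
    rw [← interior_eq_empty_iff_dense_compl]
    exact hcos
  have hDdense : Set.Icc (0:ℝ) 1 ⊆ closure D := by
    have h1 : Set.Ioo (0:ℝ) 1 ⊆ closure D := by
      intro x hx
      have := (isOpen_Ioo (a := (0:ℝ)) (b := 1)).inter_closure (t := Sᶜ)
      rw [hScomp.closure_eq, Set.inter_univ] at this
      exact this hx
    calc Set.Icc (0:ℝ) 1 = closure (Set.Ioo (0:ℝ) 1) := (closure_Ioo one_ne_zero.symm).symm
      _ ⊆ closure (closure D) := closure_mono h1
      _ = closure D := closure_closure
  -- derivative identity on D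
  have hEqOnD : Set.EqOn (deriv θ) G D := by
    intro α hα
    obtain ⟨hαIoo, hαS⟩ := hα
    have hαIcc : α ∈ Set.Icc (0:ℝ) 1 := Set.Ioo_subset_Icc_self hαIoo
    have hcosne : Real.cos (θ α) ≠ 0 := by
      intro h; exact hαS ⟨hαIcc, h⟩
    have hrne : r α ≠ 0 := (hrpos α hαIcc).ne'
    have h1 : HasDerivAt (fun x => Real.sin (θ x)) (Real.cos (θ α) * deriv θ α) α :=
      (Real.hasDerivAt_sin (θ α)).comp α (hθd α).hasDerivAt
    have hdr : HasDerivAt r (deriv r α) α := (hrd α).hasDerivAt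
    have h2 : HasDerivAt (fun x => lam * (r x - a ^ 2 / r x))
        (lam * (deriv r α - (0 * r α - a ^ 2 * deriv r α) / (r α) ^ 2)) α :=
      (hdr.sub ((hasDerivAt_const α (a ^ 2)).div hdr hrne)).const_mul lam
    have hzero : HasDerivAt (fun x => Real.sin (θ x) - lam * (r x - a ^ 2 / r x)) 0 α := by
      have hev : (fun x => Real.sin (θ x) - lam * (r x - a ^ 2 / r x)) =ᶠ[nhds α]
          (fun _ => (0:ℝ)) := by
        filter_upwards [isOpen_Ioo.mem_nhds hαIoo] with x hx
        rw [hsin x (Set.Ioo_subset_Icc_self hx)]; ring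
      exact (hasDerivAt_const α (0:ℝ)).congr_of_eventuallyEq hev
    have hkey := hzero.unique (h1.sub h2)
    rw [hr' α hαIcc] at hkey
    have hG' : G α = lam * Real.sqrt c * (1 + a ^ 2 / (r α) ^ 2) := hGeq α hαIcc
    rw [hG']
    have hr2 : (r α) ^ 2 ≠ 0 := pow_ne_zero 2 hrne
    field_simp at hkey ⊢
    have hcc : Real.cos (θ α) * (deriv θ α * r α ^ 2) =
        Real.cos (θ α) * (lam * Real.sqrt c * (r α ^ 2 + a ^ 2)) := by
      linear_combination -hkey
    have := mul_left_cancel₀ hcosne hcc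
    linear_combination this
  -- extend to [0,1] by continuity
  have hEqIcc : ∀ α ∈ Set.Icc (0:ℝ) 1,
      deriv θ α = lam * Real.sqrt c * (1 + a ^ 2 / (r α) ^ 2) := by
    intro α hα
    have := (hEqOnD.closure hθ' hGc) (hDdense hα)
    rw [this, hGeq α hα]
  have hneg : lam * Real.sqrt c < 0 := mul_neg_of_neg_of_pos hlam hsqrt
  have hmain : ∀ α ∈ Set.Icc (0:ℝ) 1,
      deriv θ α = lam * Real.sqrt c * (1 + a ^ 2 / (r α) ^ 2) ∧
      deriv θ α < lam * Real.sqrt c ∧ lam * Real.sqrt c < 0 := by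
    intro α hα
    refine ⟨hEqIcc α hα, ?_, hneg⟩
    rw [hEqIcc α hα]
    have h1 : 0 < a ^ 2 / (r α) ^ 2 :=
      div_pos (pow_pos ha 2) (pow_pos (hrpos α hα) 2)
    nlinarith
  refine ⟨hmain, ?_⟩
  apply strictAntiOn_of_deriv_neg (convex_Icc 0 1) hθC1.continuous.continuousOn
  intro x hx
  rw [interior_Icc] at hx
  have hx' : x ∈ Set.Icc (0:ℝ) 1 := Set.Ioo_subset_Icc_self hx
  have := hmain x hx'
  linarith [this.2.1, this.2.2]
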